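/- Let K, L be convex bodies in ℝ³ containing the origin in their interiors, with relative quermassintegrals W₀, W₁, W₂, W₃ of K with respect to L. If K is in the class ℜ₁ as well as in the class ℜ₂ with respect to L, then for every t ≥ 0 the body K + tL is in the class ℜ₁ with respect to L; explicitly, if B₀(r) = 2W₁ r − W₀ − W₂ r² ≥ 0 and B₁(r) = 2W₂ r − W₁ − W₃ r² ≥ 0 for all r ∈ [r_o(K,L), R_o(K,L)], then 2W₁ᵗ r − W₀ᵗ − W₂ᵗ r² ≥ 0 for all r ∈ [r_o(K+tL, L), R_o(K+tL, L)], where Wᵢᵗ = Σ_{k=0}^{3−i} C(3−i,k) W_{i+k} t^k are the relative quermassintegrals of K + tL with respect to L. -/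

import Mathlib

open scoped Pointwise RealInnerProductSpace
open MeasureTheory Metric

noncomputable section

/-- The support function `h_K(u) = sup_{x ∈ K} ⟪x, u⟫` of a set `K ⊆ ℝ³`. -/
def supp (K : Set (EuclideanSpace ℝ (Fin 3))) (u : EuclideanSpace ℝ (Fin 3)) : ℝ :=
  sSup ((fun x => ⟪x, u⟫) '' K)

/-- `r_o(K,L) = min_{u ∈ S²} h_K(u)/h_L(u)`. -/
def rIn (K L : Set (EuclideanSpace ℝ (Fin 3))) : ℝ :=
  sInf ((fun u => supp K u / supp L u) '' sphere (0 : EuclideanSpace ℝ (Fin 3)) 1)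

/-- `R_o(K,L) = max_{u ∈ S²} h_K(u)/h_L(u)`. -/
def rOut (K L : Set (EuclideanSpace ℝ (Fin 3))) : ℝ :=
  sSup ((fun u => supp K u / supp L u) '' sphere (0 : EuclideanSpace ℝ (Fin 3)) 1)

namespace Aux

abbrev E := EuclideanSpace ℝ (Fin 3)

lemma cont_inner (u : E) : Continuous fun x : E => (⟪x, u⟫ : ℝ) :=
  continuous_id.inner continuous_const

lemma bddAbove_img (u : E) {K : Set E} (hK : IsCompact K) :
    BddAbove ((fun x => (⟪x, u⟫ : ℝ)) '' K) :=
  (hK.image (cont_inner u)).bddAbove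

lemma supp_pos {K : Set E} (hK : IsCompact K) (h0 : (0 : E) ∈ interior K)
    {u : E} (hu : ‖u‖ = 1) : 0 < supp K u := by
  obtain ⟨ε, hε, hball⟩ := Metric.mem_nhds_iff.1 (mem_interior_iff_mem_nhds.1 h0)
  have hx : (ε/2) • u ∈ K := by
    apply hball
    simp [Metric.mem_ball, norm_smul, hu, abs_of_pos hε]
    linarith
  have hval : (⟪(ε/2) • u, u⟫ : ℝ) = ε/2 := by
    rw [real_inner_smul_left, real_inner_self_eq_norm_sq, hu]; ring
  have hle : ε/2 ≤ supp K u := by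
    apply le_csSup (bddAbove_img u hK)
    exact ⟨_, hx, hval⟩
  linarith

lemma supp_le {K : Set E} (hKne : K.Nonempty) {M : ℝ} (hM : K ⊆ closedBall 0 M)
    {u : E} (hu : ‖u‖ = 1) : supp K u ≤ M := by
  apply csSup_le (hKne.image _)
  rintro y ⟨x, hx, rfl⟩
  calc (⟪x, u⟫ : ℝ) ≤ ‖x‖ * ‖u‖ := real_inner_le_norm x u
    _ = ‖x‖ := by rw [hu, mul_one]
    _ ≤ M := by simpa using hM hx

/-- The key support function additivity. -/
lemma supp_add {K L : Set E} (hKc : IsCompact K) (hLc : IsCompact L)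
    (hKne : K.Nonempty) (hLne : L.Nonempty) {t : ℝ} (ht : 0 ≤ t) (u : E) :
    supp (K + t • L) u = supp K u + t * supp L u := by
  set f : E → ℝ := fun x => ⟪x, u⟫ with hf
  have hadd : ∀ x y : E, f (x + y) = f x + f y := fun x y => inner_add_left x y u
  have himg : f '' (K + t • L) = f '' K + f '' (t • L) := by
    ext z
    constructor
    · rintro ⟨x, hx, rfl⟩
      rw [Set.mem_add] at hx
      obtain ⟨a, ha, b, hb, rfl⟩ := hx
      exact ⟨f a, ⟨a, ha, rfl⟩, f b, ⟨b, hb, rfl⟩, (hadd a b).symm⟩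
    · rintro ⟨_, ⟨a, ha, rfl⟩, _, ⟨b, hb, rfl⟩, rfl⟩
      exact ⟨a + b, Set.add_mem_add ha hb, hadd a b⟩
  have himg2 : f '' (t • L) = t • (f '' L) := by
    rw [← Set.image_smul, Set.image_image, ← Set.image_smul, Set.image_image]
    apply Set.image_congr
    intro x _
    simp only [hf, real_inner_smul_left, smul_eq_mul]
  have hne1 : (f '' K).Nonempty := hKne.image _
  have hne2 : (f '' (t • L)).Nonempty := (hLne.smul_set).image _
  have hb1 : BddAbove (f '' K) := bddAbove_img u hKc
  have hb2 : BddAbove (f '' (t • L)) := bddAbove_img u (hLc.smul t)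
  show sSup (f '' (K + t • L)) = sSup (f '' K) + t * sSup (f '' L)
  rw [himg, csSup_add hne1 hb1 hne2 hb2, himg2, Real.sSup_smul_of_nonneg ht]
  rfl

/-- The image set of ratios. -/
def ratioSet (K L : Set E) : Set ℝ :=
  (fun u => supp K u / supp L u) '' sphere (0 : E) 1

lemma sphere_ne : (sphere (0 : E) 1).Nonempty :=
  NormedSpace.sphere_nonempty.mpr zero_le_one

lemma ratio_bounds {K L : Set E} (hKc : IsCompact K) (hLc : IsCompact L)
    (hK0 : (0 : E) ∈ interior K) (hL0 : (0 : E) ∈ interior L) :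
    BddBelow (ratioSet K L) ∧ BddAbove (ratioSet K L) := by
  obtain ⟨MK, hMK⟩ := hKc.isBounded.subset_closedBall 0
  obtain ⟨ML, hML0, hML⟩ := hLc.isBounded.subset_closedBall_lt 0 0
  have hKne : K.Nonempty := ⟨0, interior_subset hK0⟩
  have hLne : L.Nonempty := ⟨0, interior_subset hL0⟩
  constructor
  · refine ⟨0, ?_⟩
    rintro y ⟨u, hu, rfl⟩
    have hu1 : ‖u‖ = 1 := by simpa using hu
    exact div_nonneg (supp_pos hKc hK0 hu1).le (supp_pos hLc hL0 hu1).le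
  · -- supp L u > 0 with a uniform lower bound
    obtain ⟨ε, hε, hball⟩ := Metric.mem_nhds_iff.1 (mem_interior_iff_mem_nhds.1 hL0)
    refine ⟨MK / (ε/2), ?_⟩
    rintro y ⟨u, hu, rfl⟩
    have hu1 : ‖u‖ = 1 := by simpa using hu
    have hsuppK : supp K u ≤ MK := supp_le hKne hMK hu1
    have hMKnn : 0 < supp K u := supp_pos hKc hK0 hu1
    have hsuppL : ε/2 ≤ supp L u := by
      have hx : (ε/2) • u ∈ L := by
        apply hball
        simp [Metric.mem_ball, norm_smul, hu1, abs_of_pos hε]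
        linarith
      have hval : (⟪(ε/2) • u, u⟫ : ℝ) = ε/2 := by
        rw [real_inner_smul_left, real_inner_self_eq_norm_sq, hu1]; ring
      have h := le_csSup (bddAbove_img u hLc) (Set.mem_image_of_mem (fun x => (⟪x, u⟫ : ℝ)) hx)
      simpa [hval, supp] using h
    have hMK0 : 0 ≤ MK := by
      have := hMK (interior_subset hK0)
      simpa using this
    exact div_le_div₀ hMK0 hsuppK (by linarith) hsuppL

lemma rIn_shift {K L : Set E} (hKc : IsCompact K) (hLc : IsCompact L)
    (hK0 : (0 : E) ∈ interior K) (hL0 : (0 : E) ∈ interior L)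
    {t : ℝ} (ht : 0 ≤ t) :
    rIn (K + t • L) L = rIn K L + t ∧ rOut (K + t • L) L = rOut K L + t := by
  have hKne : K.Nonempty := ⟨0, interior_subset hK0⟩
  have hLne : L.Nonempty := ⟨0, interior_subset hL0⟩
  have himg : (fun u => supp (K + t • L) u / supp L u) '' sphere (0 : E) 1
      = (fun x => x + t) '' ratioSet K L := by
    rw [ratioSet, Set.image_image]
    apply Set.image_congr
    intro u hu
    have hu1 : ‖u‖ = 1 := by simpa using hu
    have hL : supp L u ≠ 0 := (supp_pos hLc hL0 hu1).ne'
    rw [supp_add hKc hLc hKne hLne ht u]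
    field_simp
  obtain ⟨hbb, hba⟩ := ratio_bounds hKc hLc hK0 hL0
  have hne : (ratioSet K L).Nonempty := sphere_ne.image _
  constructor
  · show sInf _ = _
    rw [himg]
    exact ((OrderIso.addRight t).map_csInf' hne hbb).symm
  · show sSup _ = _
    rw [himg]
    exact ((OrderIso.addRight t).map_csSup' hne hba).symm

end Aux

/-- If `K` is in the class `ℜ₁` as well as in the class `ℜ₂` with respect to `L`,
then for every `t ≥ 0` the outer parallel body `K + tL` is in the class `ℜ₁` with respect to
`L`, whose relative quermassintegrals are `Wᵢᵗ = ∑_{k=0}^{3-i} C(3-i,k) W_{i+k} t^k`. -/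
theorem class_R1_and_R2_implies_parallel_body_R1
    (K L : Set (EuclideanSpace ℝ (Fin 3)))
    (hKc : IsCompact K) (hKconv : Convex ℝ K) (hKint : (interior K).Nonempty)
    (hLc : IsCompact L) (hLconv : Convex ℝ L) (hLint : (interior L).Nonempty)
    (hK0 : (0 : EuclideanSpace ℝ (Fin 3)) ∈ interior K)
    (hL0 : (0 : EuclideanSpace ℝ (Fin 3)) ∈ interior L)
    (W₀ W₁ W₂ W₃ : ℝ)
    (hW : ∀ t : ℝ, 0 ≤ t →
      (volume (K + t • L)).toReal = W₀ + 3 * W₁ * t + 3 * W₂ * t ^ 2 + W₃ * t ^ 3)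
    (hR1 : ∀ r ∈ Set.Icc (rIn K L) (rOut K L), 2 * W₁ * r - W₀ - W₂ * r ^ 2 ≥ 0)
    (hR2 : ∀ r ∈ Set.Icc (rIn K L) (rOut K L), 2 * W₂ * r - W₁ - W₃ * r ^ 2 ≥ 0) :
    ∀ t : ℝ, 0 ≤ t →
      ∀ r ∈ Set.Icc (rIn (K + t • L) L) (rOut (K + t • L) L),
        2 * (W₁ + 2 * W₂ * t + W₃ * t ^ 2) * r
            - (W₀ + 3 * W₁ * t + 3 * W₂ * t ^ 2 + W₃ * t ^ 3)
            - (W₂ + W₃ * t) * r ^ 2 ≥ 0 := by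
  intro t ht r hr
  obtain ⟨hIn, hOut⟩ := Aux.rIn_shift hKc hLc hK0 hL0 ht
  rw [hIn, hOut] at hr
  have hs : r - t ∈ Set.Icc (rIn K L) (rOut K L) := by
    constructor <;> [linarith [hr.1]; linarith [hr.2]]
  have h1 := hR1 (r - t) hs
  have h2 := hR2 (r - t) hs
  nlinarith [mul_nonneg ht h2, h1]
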